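/- If S is a finite M-set in a finite-dimensional normed space, then no point of S lies in the convex hull of the remaining points; i.e., S is the vertex set of the polytope conv(S). -/
import Mathlib

theorem mset_convex_position
    (X : Type*) [NormedAddCommGroup X] [NormedSpace ℝ X] [FiniteDimensional ℝ X]
    (S : Finset X)
    (hnorm : ∀ x ∈ S, 1 < ‖x‖)
    (hmid : ∀ x ∈ S, ∀ y ∈ S, x ≠ y → ‖x + y‖ = 2) :
    ∀ x ∈ S, x ∉ convexHull ℝ ((S : Set X) \ {x}) := by
  intro x hx h
  have hsub : (S : Set X) \ {x} ⊆ Metric.closedBall (-x) 2 := by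
    intro y hy
    rcases hy with ⟨hyS, hyx⟩
    have : ‖x + y‖ = 2 := hmid x hx y hyS (fun hxy => hyx (by simp [← hxy]))
    simp only [Metric.mem_closedBall, dist_eq_norm, sub_neg_eq_add]
    rw [add_comm, this]
  have hx2 : x ∈ Metric.closedBall (-x) 2 :=
    convexHull_min hsub (convex_closedBall _ _) h
  rw [Metric.mem_closedBall, dist_eq_norm, sub_neg_eq_add] at hx2
  have : ‖x + x‖ = 2 * ‖x‖ := by
    rw [← two_smul ℝ x, norm_smul]; simp
  nlinarith [hnorm x hx]
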